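/- Let V be a finite-dimensional real normed vector space and K ⊆ V a nonempty compact convex set. Let φ be a linear functional on the real vector space of affine maps V → ℝ such that φ(f) ≥ 0 for every affine f : V → ℝ with f(x) ≥ 0 for all x ∈ K, and φ(1) = 1 where 1 denotes the constant affine function with value 1. Then there exists x ∈ K such that φ(f) = f(x) for every affine map f : V → ℝ. (Every positive normalized functional on the affine functions over K is evaluation at a point of K.) -/

import Mathlib

/-- every positive normalized linear functional on the space of affine
functions over a nonempty compact convex set `K` is evaluation at a point of `K`. -/
theorem positive_normalized_functional_is_evaluation
    {V : Type*} [NormedAddCommGroup V] [NormedSpace ℝ V] [FiniteDimensional ℝ V]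
    (K : Set V) (hne : K.Nonempty) (hcomp : IsCompact K) (hconv : Convex ℝ K)
    (φ : (V →ᵃ[ℝ] ℝ) →ₗ[ℝ] ℝ)
    (hpos : ∀ f : V →ᵃ[ℝ] ℝ, (∀ x ∈ K, 0 ≤ f x) → 0 ≤ φ f)
    (hone : φ (AffineMap.const ℝ V (1 : ℝ)) = 1) :
    ∃ x ∈ K, ∀ f : V →ᵃ[ℝ] ℝ, φ f = f x := by
  -- ψ : dual of dual
  set ψ : Module.Dual ℝ (Module.Dual ℝ V) :=
    { toFun := fun ℓ => φ ℓ.toAffineMap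
      map_add' := fun ℓ₁ ℓ₂ => by
        have h : (ℓ₁ + ℓ₂).toAffineMap = ℓ₁.toAffineMap + ℓ₂.toAffineMap :=
          AffineMap.ext fun v => by simp
        show φ (ℓ₁ + ℓ₂).toAffineMap = φ ℓ₁.toAffineMap + φ ℓ₂.toAffineMap
        rw [h, map_add]
      map_smul' := fun c ℓ => by
        have h : (c • ℓ).toAffineMap = c • ℓ.toAffineMap :=
          AffineMap.ext fun v => by simp
        simp only [RingHom.id_apply]
        show φ (LinearMap.toAffineMap (c • ℓ)) = c • φ (LinearMap.toAffineMap ℓ)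
        rw [h, map_smul] } with hψ
  set x : V := (Module.evalEquiv ℝ V).symm ψ with hx
  have hxeval : ∀ ℓ : Module.Dual ℝ V, φ ℓ.toAffineMap = ℓ x := by
    intro ℓ
    have : Module.evalEquiv ℝ V x = ψ := by simp [hx]
    have h2 := congrArg (fun g => g ℓ) this
    rw [← show ψ ℓ = φ ℓ.toAffineMap from rfl]
    simpa [Module.evalEquiv, Module.Dual.eval] using h2.symm
  have hall : ∀ f : V →ᵃ[ℝ] ℝ, φ f = f x := by
    intro f
    have hdecomp : f = f.linear.toAffineMap + AffineMap.const ℝ V (f 0) := by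
      ext v
      have := congrFun f.decomp v
      simpa using this
    rw [hdecomp]
    rw [map_add, hxeval]
    have : AffineMap.const ℝ V (f 0) = (f 0) • AffineMap.const ℝ V (1 : ℝ) := by
      ext v; simp
    rw [this, map_smul, hone]
    simp [mul_comm]
  refine ⟨x, ?_, hall⟩
  by_contra hxK
  obtain ⟨ℓ, u, hlt, hux⟩ := geometric_hahn_banach_closed_point hconv hcomp.isClosed hxK
  set g : V →ᵃ[ℝ] ℝ := AffineMap.const ℝ V u - ℓ.toLinearMap.toAffineMap with hg
  have hgpos : ∀ y ∈ K, 0 ≤ g y := fun y hy => by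
    simp [hg]
    exact (hlt y hy).le
  have := hpos g hgpos
  have hgx : φ g = u - ℓ x := by
    rw [hg, map_sub, hxeval]
    have : AffineMap.const ℝ V u = u • AffineMap.const ℝ V (1 : ℝ) := by ext v; simp
    rw [this, map_smul, hone]
    simp
  rw [hgx] at this
  linarith
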